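/- Let E and E' be sets of items of unit-density instances and let a be an agent such that E a-dominates E'. Then Σ_{i∈E_a} v_i x_i(E) ≥ Σ_{i∈E'_a} v_i x_i(E'), where x denotes the fractional greedy solution. -/

import Mathlib

open Finset

/-- The fractional greedy solution for a unit-density set of items (the size of each item
equals its value): items are packed in decreasing order of value until the capacity is
reached. -/
noncomputable def udx {ι : Type*} (v : ι → ℝ) (C : ℝ) (E : Finset ι) (i : ι) : ℝ :=
  min 1 (max 0 ((C - ∑ j ∈ E.filter (fun j => v i < v j), v j) / v i))

/-- The `k`-th largest value (1-indexed) among the items of `F`. -/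
noncomputable def kthLargest {ι : Type*} (v : ι → ℝ) (F : Finset ι) (k : ℕ) : ℝ :=
  ((F.image v).sort (· ≤ ·)).reverse.getD (k - 1) 0

/-- `E` `a`-dominates `E'`: the values of agent `a`'s items in `E` are lexicographically
larger than those in `E'`, and the values of the items of the other agents in `E` are
lexicographically smaller than those in `E'`. -/
def aDominates {ι A : Type*} [DecidableEq ι] [DecidableEq A]
    (v : ι → ℝ) (owner : ι → A) (a : A) (E E' : Finset ι) : Prop :=
  (E'.filter (fun i => owner i = a)).card ≤ (E.filter (fun i => owner i = a)).card ∧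
  (E.filter (fun i => ¬ owner i = a)).card ≤ (E'.filter (fun i => ¬ owner i = a)).card ∧
  (∀ k : ℕ, 1 ≤ k → k ≤ (E'.filter (fun i => owner i = a)).card →
    kthLargest v (E'.filter (fun i => owner i = a)) k ≤
      kthLargest v (E.filter (fun i => owner i = a)) k) ∧
  (∀ k : ℕ, 1 ≤ k → k ≤ (E.filter (fun i => ¬ owner i = a)).card →
    kthLargest v (E.filter (fun i => ¬ owner i = a)) k ≤
      kthLargest v (E'.filter (fun i => ¬ owner i = a)) k)



/-- Value collected from a descending list of own items, given capacity `C`,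
competitor load function `N`, and own load already used `s`. -/
noncomputable def Fval (C : ℝ) (N : ℝ → ℝ) : List ℝ → ℝ → ℝ
  | [], _ => 0
  | α :: L, s => min α (max 0 (C - N α - s)) + Fval C N L (s + α)

lemma Fval_nil (C : ℝ) (N : ℝ → ℝ) (s : ℝ) : Fval C N [] s = 0 := rfl

lemma Fval_cons (C : ℝ) (N : ℝ → ℝ) (a : ℝ) (L : List ℝ) (s : ℝ) :
    Fval C N (a :: L) s = min a (max 0 (C - N a - s)) + Fval C N L (s + a) := rfl

lemma Fval_nonneg (C : ℝ) (N : ℝ → ℝ) (L : List ℝ) (s : ℝ)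
    (hpos : ∀ x ∈ L, 0 < x) : 0 ≤ Fval C N L s := by
  induction L generalizing s with
  | nil => simp [Fval_nil]
  | cons a T ih =>
    rw [Fval_cons]
    have h0 : 0 < a := hpos a (by simp)
    have := ih (s + a) (fun x hx => hpos x (by simp [hx]))
    have : (0:ℝ) ≤ min a (max 0 (C - N a - s)) := le_min h0.le (le_max_left _ _)
    positivity

lemma clamp_add (a c : ℝ) (ha : 0 < a) :
    min a (max 0 c) + max 0 (c - a) ≤ max 0 c := by
  rcases le_total c 0 with h | h
  · rcases le_total a c with h2 | h2 <;> simp [max_eq_left, h, show c - a ≤ 0 by linarith] <;> positivity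
  · rcases le_total a c with h2 | h2
    · rw [min_eq_left (by simp [h2, h] : a ≤ max 0 c), max_eq_right (by linarith : (0:ℝ) ≤ c - a),
        max_eq_right h]; linarith
    · rw [max_eq_left (by linarith : c - a ≤ 0), min_eq_right (max_le ha.le h2)]
      simp

lemma Fval_le_head (C : ℝ) (N : ℝ → ℝ) (hN : Antitone N) (a : ℝ) (L : List ℝ) (s : ℝ)
    (hpos : ∀ x ∈ a :: L, 0 < x) (hsort : (a :: L).Pairwise (· ≥ ·)) :
    Fval C N (a :: L) s ≤ max 0 (C - N a - s) := by
  induction L generalizing a s with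
  | nil => rw [Fval_cons, Fval_nil, add_zero]; exact min_le_right _ _
  | cons b T ih =>
    rw [Fval_cons]
    have hba : b ≤ a := (List.pairwise_cons.1 hsort).1 b (by simp)
    have htail : Fval C N (b :: T) (s + a) ≤ max 0 (C - N b - (s + a)) :=
      ih b (s + a) (fun x hx => hpos x (by simp at hx ⊢; tauto)) (List.pairwise_cons.1 hsort).2
    have hNba : N a ≤ N b := hN hba
    have h2 : max 0 (C - N b - (s + a)) ≤ max 0 ((C - N a - s) - a) :=
      max_le_max le_rfl (by linarith)
    calc min a (max 0 (C - N a - s)) + Fval C N (b :: T) (s + a)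
        ≤ min a (max 0 (C - N a - s)) + max 0 ((C - N a - s) - a) := by linarith
      _ ≤ max 0 (C - N a - s) := clamp_add a _ (hpos a (by simp))

lemma Fval_lipschitz (C : ℝ) (N : ℝ → ℝ) (hN : Antitone N) (L : List ℝ) (s δ : ℝ)
    (hδ : 0 ≤ δ) (hpos : ∀ x ∈ L, 0 < x) (hsort : L.Pairwise (· ≥ ·)) :
    Fval C N L s ≤ Fval C N L (s + δ) + δ := by
  induction L generalizing s with
  | nil => simp [Fval_nil]; linarith
  | cons a T ih =>
    have ha : 0 < a := hpos a (by simp)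
    set c := C - N a - s with hc
    rcases le_or_gt a (c - δ) with h1 | h1
    · rw [Fval_cons, Fval_cons]
      have e1 : min a (max 0 c) = a := min_eq_left (le_max_of_le_right (by linarith))
      have e2 : min a (max 0 (C - N a - (s + δ))) = a :=
        min_eq_left (le_max_of_le_right (by simp [hc] at h1 ⊢; linarith))
      rw [e1, e2]
      have := ih (s + a) (fun x hx => hpos x (by simp [hx])) (List.pairwise_cons.1 hsort).2
      have harr : s + a + δ = s + δ + a := by ring
      rw [harr] at this
      linarith
    · have hhead : Fval C N (a :: T) s ≤ max 0 c := Fval_le_head C N hN a T s hpos hsort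
      have h2 : max 0 c ≤ max 0 (c - δ) + δ := by
        rcases le_total c 0 with h | h
        · rw [max_eq_left h]; positivity
        · rw [max_eq_right h]
          rcases le_total (c - δ) 0 with h3 | h3
          · rw [max_eq_left h3]; linarith
          · rw [max_eq_right h3]; linarith
      have h3 : max 0 (c - δ) ≤ Fval C N (a :: T) (s + δ) := by
        rw [Fval_cons]
        have hmin : min a (max 0 (C - N a - (s + δ))) = max 0 (c - δ) := by
          rw [min_eq_right]
          · congr 1; rw [hc]; ring
          · apply max_le ha.le (by simp [hc] at h1 ⊢; linarith)
        rw [hmin]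
        have := Fval_nonneg C N T (s + δ + a) (fun x hx => hpos x (by simp [hx]))
        linarith
      linarith

lemma Fval_main (C : ℝ) (N N' : ℝ → ℝ) (hN : Antitone N) (hN' : Antitone N')
    (hNN' : ∀ t, N t ≤ N' t) (L' L : List ℝ) (s : ℝ)
    (hpos : ∀ x ∈ L, 0 < x) (hsort : L.Pairwise (· ≥ ·))
    (hpos' : ∀ x ∈ L', 0 < x) (hsort' : L'.Pairwise (· ≥ ·))
    (hF : List.Forall₂ (· ≤ ·) L' (L.take L'.length)) :
    Fval C N' L' s ≤ Fval C N L s := by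
  induction L' generalizing L s with
  | nil => exact Fval_nonneg C N L s hpos
  | cons a' T' ih =>
    cases L with
    | nil => simp at hF
    | cons a T =>
      simp only [List.length_cons, List.take_succ_cons, List.forall₂_cons] at hF
      obtain ⟨haa, hFT⟩ := hF
      have ha' : 0 < a' := hpos' a' (by simp)
      have ha : 0 < a := hpos a (by simp)
      set c' := C - N' a' - s with hc'
      set c := C - N a - s with hc
      have hcc : c' ≤ c := by
        have : N a ≤ N' a' := le_trans (hNN' a) (hN' haa)
        simp [hc, hc']; linarith
      have htpos' : ∀ x ∈ T', 0 < x := fun x hx => hpos' x (by simp [hx])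
      have htpos : ∀ x ∈ T, 0 < x := fun x hx => hpos x (by simp [hx])
      have htsort' := (List.pairwise_cons.1 hsort').2
      have htsort := (List.pairwise_cons.1 hsort).2
      rcases le_or_gt c' a' with h1 | h1
      · -- LHS ≤ max 0 c' ≤ min a (max 0 c) ≤ RHS
        have hL : Fval C N' (a' :: T') s ≤ max 0 c' :=
          Fval_le_head C N' hN' a' T' s hpos' hsort'
        have hR : min a (max 0 c) ≤ Fval C N (a :: T) s := by
          rw [Fval_cons]
          have := Fval_nonneg C N T (s + a) htpos
          linarith
        have : max 0 c' ≤ min a (max 0 c) :=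
          le_min (max_le ha.le (by linarith)) (max_le_max le_rfl hcc)
        linarith
      · have e1 : min a' (max 0 c') = a' :=
          min_eq_left (le_max_of_le_right h1.le)
        rcases le_or_gt a c with h2 | h2
        · have e2 : min a (max 0 c) = a := min_eq_left (le_max_of_le_right h2)
          rw [Fval_cons, Fval_cons, e1, e2]
          have hih : Fval C N' T' (s + a') ≤ Fval C N T (s + a') :=
            ih T (s + a') htpos htsort htpos' htsort' hFT
          have hlip : Fval C N T (s + a') ≤ Fval C N T (s + a' + (a - a')) + (a - a') :=
            Fval_lipschitz C N hN T (s + a') (a - a') (by linarith) htpos htsort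
          have harr : s + a' + (a - a') = s + a := by ring
          rw [harr] at hlip
          linarith
        · -- c < a : RHS ≥ c ≥ c' ≥ LHS
          have hR : c ≤ Fval C N (a :: T) s := by
            rw [Fval_cons]
            have hmin : min a (max 0 c) = c := by
              rw [max_eq_right (by linarith : (0:ℝ) ≤ c)]
              exact min_eq_right h2.le
            have := Fval_nonneg C N T (s + a) htpos
            linarith
          have hL : Fval C N' (a' :: T') s ≤ c' := by
            rw [Fval_cons, e1]
            cases T' with
            | nil => rw [Fval_nil]; linarith
            | cons b' U' =>
              have hb'a' : b' ≤ a' := (List.pairwise_cons.1 hsort').1 b' (by simp)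
              have := Fval_le_head C N' hN' b' U' (s + a') htpos' htsort'
              have hNb : N' a' ≤ N' b' := hN' hb'a'
              have : Fval C N' (b' :: U') (s + a') ≤ max 0 (c' - a') :=
                le_trans this (max_le_max le_rfl (by simp [hc']; linarith))
              have : Fval C N' (b' :: U') (s + a') ≤ c' - a' := by
                rcases le_total (c' - a') 0 with h | h
                · rw [max_eq_left h] at this; linarith
                · rw [max_eq_right h] at this; linarith
              linarith
          linarith

/-- Values of a finset of reals, sorted in decreasing order. -/
noncomputable def descSort (V : Finset ℝ) : List ℝ := (V.sort (· ≤ ·)).reverse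

lemma descSort_sorted (V : Finset ℝ) : (descSort V).Pairwise (· ≥ ·) :=
  List.pairwise_reverse.2 (Finset.pairwise_sort V (· ≤ ·))

lemma mem_descSort {V : Finset ℝ} {x : ℝ} : x ∈ descSort V ↔ x ∈ V := by
  simp [descSort, Finset.mem_sort]

lemma descSort_length (V : Finset ℝ) : (descSort V).length = V.card := by
  simp [descSort]

lemma descSort_insert {V : Finset ℝ} {m : ℝ} (hm : ∀ x ∈ V, x < m) :
    descSort (insert m V) = m :: descSort V := by
  have hmV : m ∉ V := fun h => lt_irrefl m (hm m h)
  have hsort : (insert m V).sort (· ≤ ·) = V.sort (· ≤ ·) ++ [m] := by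
    refine (fun p s1 s2 => List.Perm.eq_of_pairwise' (r := (· ≤ ·)) s1 s2 p) ?_ ?_ ?_
    · have p1 : List.Perm (Finset.sort (insert m V) (· ≤ ·)) ((insert m V).toList) :=
        Finset.sort_perm_toList _ _
      have p2 : List.Perm ((insert m V).toList) (m :: V.toList) := Finset.toList_insert hmV
      have p3 : List.Perm (m :: V.toList) (m :: V.sort (· ≤ ·)) :=
        List.Perm.cons m (Finset.sort_perm_toList _ _).symm
      exact ((p1.trans p2).trans p3).trans (List.perm_append_singleton m _).symm
    · exact Finset.pairwise_sort _ _
    · rw [List.pairwise_append]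
      refine ⟨Finset.pairwise_sort _ _, List.pairwise_singleton _ _, ?_⟩
      intro x hx y hy
      simp only [List.mem_singleton] at hy
      subst hy
      exact (hm x ((Finset.mem_sort _).1 hx)).le
  rw [descSort, hsort, List.reverse_append]
  simp [descSort]

/-- Load of competitor items with value greater than `t`. -/
noncomputable def NW (W : Finset ℝ) (t : ℝ) : ℝ := ∑ x ∈ W, if t < x then x else 0

lemma NW_antitone {W : Finset ℝ} (hW : ∀ x ∈ W, 0 ≤ x) : Antitone (NW W) := by
  intro t t' htt'
  apply Finset.sum_le_sum
  intro x hx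
  split_ifs with h1 h2 <;> first | rfl | linarith [hW x hx]

noncomputable def NL (l : List ℝ) (t : ℝ) : ℝ := (l.map (fun x => if t < x then x else 0)).sum

lemma NW_eq_NL (W : Finset ℝ) (t : ℝ) : NW W t = NL (descSort W) t := by
  rw [NW, NL, descSort, List.map_reverse, List.sum_reverse]
  rw [← Finset.sum_map_toList]
  exact (List.Perm.sum_eq (List.Perm.map _ (Finset.sort_perm_toList _ _))).symm

lemma NL_mono_forall₂ {M K : List ℝ} (t : ℝ) (h : List.Forall₂ (· ≤ ·) M K)
    (hK : ∀ x ∈ K, 0 ≤ x) : NL M t ≤ NL K t := by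
  induction h with
  | nil => exact le_rfl
  | @cons a b M1 K1 hab h ih =>
    simp only [NL, List.map_cons, List.sum_cons]
    have hb : 0 ≤ b := hK b (by simp)
    have h1 : (if t < a then a else 0) ≤ (if t < b then b else 0) := by
      split_ifs with h1 h2 <;> linarith
    have h2 := ih (fun x hx => hK x (by simp [hx]))
    simp only [NL] at h2
    linarith

lemma NL_nonneg (l : List ℝ) (t : ℝ) (hl : ∀ x ∈ l, 0 ≤ x) : 0 ≤ NL l t := by
  apply List.sum_nonneg
  intro x hx
  simp only [List.mem_map] at hx
  obtain ⟨y, hy, rfl⟩ := hx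
  split_ifs with h
  · exact hl y hy
  · rfl

lemma NL_take_le (l : List ℝ) (n : ℕ) (t : ℝ) (hl : ∀ x ∈ l, 0 ≤ x) :
    NL (l.take n) t ≤ NL l t := by
  conv_rhs => rw [← List.take_append_drop n l]
  rw [NL, NL, List.map_append, List.sum_append]
  have := NL_nonneg (l.drop n) t (fun x hx => hl x (List.drop_subset _ _ hx))
  rw [NL] at this
  linarith

lemma NL_mono {M M' : List ℝ} (t : ℝ) (h : List.Forall₂ (· ≤ ·) M (M'.take M.length))
    (hM' : ∀ x ∈ M', 0 ≤ x) : NL M t ≤ NL M' t :=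
  le_trans (NL_mono_forall₂ t h (fun x hx => hM' x (List.take_subset _ _ hx)))
    (NL_take_le M' M.length t hM')

lemma getD_forall₂ : ∀ (l₁ l₂ : List ℝ), l₁.length ≤ l₂.length →
    (∀ j < l₁.length, l₁.getD j 0 ≤ l₂.getD j 0) →
    List.Forall₂ (· ≤ ·) l₁ (l₂.take l₁.length)
  | [], _, _, _ => by simp
  | a :: T, [], h, _ => by simp at h
  | a :: T, b :: S, h, hj => by
    simp only [List.length_cons, List.take_succ_cons]
    refine List.Forall₂.cons ?_ (getD_forall₂ T S (by simpa using h) ?_)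
    · simpa using hj 0 (by simp)
    · intro j hjl
      simpa using hj (j + 1) (by simpa using hjl)

/-- The key summation identity. -/
lemma sum_eq_Fval (C : ℝ) (N : ℝ → ℝ) (V : Finset ℝ) : ∀ s : ℝ,
    ∑ x ∈ V, min x (max 0 (C - N x - (∑ y ∈ V.filter (fun y => x < y), y) - s)) =
      Fval C N (descSort V) s := by
  induction V using Finset.induction_on_max with
  | empty => intro s; simp [descSort, Fval_nil]
  | insert m V hm ih =>
    intro s
    have hmV : m ∉ V := fun h => lt_irrefl m (hm m h)
    rw [descSort_insert hm, Fval_cons, Finset.sum_insert hmV]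
    congr 1
    · have : (insert m V).filter (fun y => m < y) = ∅ := by
        apply Finset.filter_false_of_mem
        intro y hy
        simp only [not_lt]
        rcases Finset.mem_insert.1 hy with rfl | hy'
        · exact le_rfl
        · exact (hm y hy').le
      rw [this]
      norm_num
    · rw [← ih (s + m)]
      apply Finset.sum_congr rfl
      intro x hx
      have hfil : (insert m V).filter (fun y => x < y) = insert m (V.filter (fun y => x < y)) := by
        rw [Finset.filter_insert, if_pos (hm x hx)]
      rw [hfil, Finset.sum_insert (fun h => hmV (Finset.mem_filter.1 h).1)]
      congr 2
      ring

lemma side_eq_Fval {ι A : Type*} [DecidableEq ι] [DecidableEq A] (v : ι → ℝ) (owner : ι → A) (C : ℝ) (hv : ∀ i, 0 < v i)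
    (hvinj : Function.Injective v) (E : Finset ι) (a : A) :
    ∑ i ∈ E.filter (fun i => owner i = a), v i * udx v C E i =
      Fval C (NW ((E.filter (fun i => ¬ owner i = a)).image v))
        (descSort ((E.filter (fun i => owner i = a)).image v)) 0 := by
  set Ea := E.filter (fun i => owner i = a) with hEa
  set En := E.filter (fun i => ¬ owner i = a) with hEn
  set V := Ea.image v with hV
  set W := En.image v with hW
  rw [← sum_eq_Fval, hV, Finset.sum_image (fun x _ y _ h => hvinj h)]
  apply Finset.sum_congr rfl
  intro i hi
  have hvi : 0 < v i := hv i
  have hudx : v i * udx v C E i =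
      min (v i) (max 0 (C - ∑ j ∈ E.filter (fun j => v i < v j), v j)) := by
    rw [udx, mul_min_of_nonneg _ _ hvi.le, mul_one, mul_max_of_nonneg _ _ hvi.le, mul_zero,
      mul_div_cancel₀ _ (ne_of_gt hvi)]
  rw [hudx]
  have hS : ∑ j ∈ E.filter (fun j => v i < v j), v j =
      (∑ y ∈ V.filter (fun y => v i < y), y) + NW W (v i) := by
    rw [Finset.sum_filter]
    rw [← Finset.sum_filter_add_sum_filter_not E (fun j => owner j = a)
      (fun j => if v i < v j then v j else 0)]
    congr 1
    · rw [Finset.sum_filter (fun y => v i < y) (fun y : ℝ => y), hV,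
        Finset.sum_image (fun x _ y _ h => hvinj h)]
    · rw [NW, hW, Finset.sum_image (fun x _ y _ h => hvinj h)]
  rw [hS]
  congr 2
  ring


/-- if `E` `a`-dominates `E'`, then the value of agent `a`'s items in the
fractional greedy solution for `E` is at least that in the fractional greedy solution
for `E'`. -/
theorem stmt_9 {ι A : Type*} [DecidableEq ι] [DecidableEq A]
    (v : ι → ℝ) (owner : ι → A) (C : ℝ)
    (hC : 0 < C) (hv : ∀ i, 0 < v i) (hvC : ∀ i, v i ≤ C)
    (hvinj : Function.Injective v)
    (E E' : Finset ι) (a : A)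
    (hdom : aDominates v owner a E E') :
    ∑ i ∈ E'.filter (fun i => owner i = a), v i * udx v C E' i ≤
      ∑ i ∈ E.filter (fun i => owner i = a), v i * udx v C E i := by
  obtain ⟨hcard_a, hcard_n, hk_a, hk_n⟩ := hdom
  rw [side_eq_Fval v owner C hv hvinj E a, side_eq_Fval v owner C hv hvinj E' a]
  set V := (E.filter (fun i => owner i = a)).image v with hV
  set W := (E.filter (fun i => ¬ owner i = a)).image v with hW
  set V' := (E'.filter (fun i => owner i = a)).image v with hV'
  set W' := (E'.filter (fun i => ¬ owner i = a)).image v with hW'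
  have hposV : ∀ x ∈ descSort V, 0 < x := by
    intro x hx
    obtain ⟨j, _, rfl⟩ := Finset.mem_image.1 (mem_descSort.1 hx)
    exact hv j
  have hposV' : ∀ x ∈ descSort V', 0 < x := by
    intro x hx
    obtain ⟨j, _, rfl⟩ := Finset.mem_image.1 (mem_descSort.1 hx)
    exact hv j
  have hposW : ∀ x ∈ W, 0 ≤ x := by
    intro x hx
    obtain ⟨j, _, rfl⟩ := Finset.mem_image.1 hx
    exact (hv j).le
  have hposW' : ∀ x ∈ W', 0 ≤ x := by
    intro x hx
    obtain ⟨j, _, rfl⟩ := Finset.mem_image.1 hx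
    exact (hv j).le
  -- lengths
  have hlenV : (descSort V).length = (E.filter (fun i => owner i = a)).card := by
    rw [descSort_length, hV, Finset.card_image_of_injective _ hvinj]
  have hlenV' : (descSort V').length = (E'.filter (fun i => owner i = a)).card := by
    rw [descSort_length, hV', Finset.card_image_of_injective _ hvinj]
  have hlenW : (descSort W).length = (E.filter (fun i => ¬ owner i = a)).card := by
    rw [descSort_length, hW, Finset.card_image_of_injective _ hvinj]
  have hlenW' : (descSort W').length = (E'.filter (fun i => ¬ owner i = a)).card := by
    rw [descSort_length, hW', Finset.card_image_of_injective _ hvinj]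
  -- kthLargest is getD of descSort
  have hkth : ∀ (F : Finset ι) (k : ℕ), kthLargest v F k = (descSort (F.image v)).getD (k-1) 0 :=
    fun F k => rfl
  apply Fval_main C (NW W) (NW W') (NW_antitone hposW) (NW_antitone hposW') ?_
    (descSort V') (descSort V) 0 hposV (descSort_sorted V) hposV' (descSort_sorted V')
    ?_
  · -- NW W ≤ NW W'
    intro t
    rw [NW_eq_NL, NW_eq_NL]
    apply NL_mono t ?_ (fun x hx => hposW' x (mem_descSort.1 hx))
    apply getD_forall₂
    · rw [hlenW, hlenW']; exact hcard_n
    · intro j hj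
      have hjc : j + 1 ≤ (E.filter (fun i => ¬ owner i = a)).card := by
        rw [← hlenW]; omega
      have h := hk_n (j + 1) (by omega) hjc
      rw [hkth, hkth, ← hW, ← hW'] at h
      simpa using h
  · apply getD_forall₂
    · rw [hlenV, hlenV']; exact hcard_a
    · intro j hj
      have hjc : j + 1 ≤ (E'.filter (fun i => owner i = a)).card := by
        rw [← hlenV']; omega
      have h := hk_a (j + 1) (by omega) hjc
      rw [hkth, hkth, ← hV, ← hV'] at h
      simpa using h
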